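/- Let T be the 3×3 upper-triangular matrix with diagonal entries all equal to ω ∈ ℂ, (1,2)-entry α, (2,3)-entry β, and all other entries zero, where |ω| < 1. Then T is a contraction (operator norm at most 1) if and only if |α| ≤ 1 − |ω|², |β| ≤ 1 − |ω|², and |αβω|² ≤ ((1−|ω|²)² − |α|²)·((1−|ω|²)² − |β|²). -/

import Mathlib

open Complex ComplexConjugate

private lemma cross_bound (p q : ℝ) (c y z : ℂ) (hp : 0 ≤ p) (hq : 0 ≤ q)
    (h : normSq c ≤ p * q) :
    2 * (c * (y * conj z)).re ≤ p * normSq y + q * normSq z := by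
  have h1 : (c * (y * conj z)).re ≤ ‖c * (y * conj z)‖ := Complex.re_le_norm _
  have h2 : (‖c * (y * conj z)‖) ^ 2 = normSq c * (normSq y * normSq z) := by
    rw [Complex.sq_norm]
    simp [Complex.normSq_mul]
  have h3 : 0 ≤ ‖c * (y * conj z)‖ := norm_nonneg _
  nlinarith [Complex.normSq_nonneg y, Complex.normSq_nonneg z,
    sq_nonneg (p * normSq y - q * normSq z),
    mul_nonneg (Complex.normSq_nonneg y) (Complex.normSq_nonneg z),
    mul_nonneg hp (Complex.normSq_nonneg y), mul_nonneg hq (Complex.normSq_nonneg z)]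

private lemma normSq_aux1 (c : ℂ) (t : ℝ) : normSq (conj c * (t : ℂ)) = normSq c * t ^ 2 := by
  rw [normSq_mul, normSq_conj, normSq_ofReal]; ring

private lemma normSq_aux2 (c d : ℂ) (t : ℝ) :
    normSq (conj c * conj d * (t : ℂ)) = normSq c * normSq d * t ^ 2 := by
  rw [normSq_mul, normSq_mul, normSq_conj, normSq_conj, normSq_ofReal]; ring

private lemma re_aux1 (c : ℂ) (t u : ℝ) :
    (c * ((conj c * (t : ℂ)) * conj ((u : ℝ) : ℂ))).re = normSq c * (t * u) := by
  rw [conj_ofReal]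
  have e : c * ((conj c * (t : ℂ)) * ((u : ℝ) : ℂ))
      = (c * conj c) * (((t : ℝ) : ℂ) * ((u : ℝ) : ℂ)) := by ring
  rw [e, Complex.mul_conj, ← Complex.ofReal_mul, ← Complex.ofReal_mul, Complex.ofReal_re]

private lemma re_aux2 (c d : ℂ) (s t : ℝ) :
    (c * ((conj c * conj d * (s : ℂ)) * conj (conj d * (t : ℂ)))).re
      = normSq c * normSq d * (s * t) := by
  rw [map_mul, Complex.conj_conj, conj_ofReal]
  have e : c * ((conj c * conj d * (s : ℂ)) * (d * ((t : ℝ) : ℂ)))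
      = (c * conj c) * (d * conj d) * (((s : ℝ) : ℂ) * ((t : ℝ) : ℂ)) := by ring
  rw [e, Complex.mul_conj, Complex.mul_conj, ← Complex.ofReal_mul, ← Complex.ofReal_mul,
    ← Complex.ofReal_mul, Complex.ofReal_re]

private lemma key_iff (ω α β : ℂ) (hω : normSq ω < 1) :
    (∀ x y z : ℂ,
        normSq (ω * x + α * y) + normSq (ω * y + β * z) + normSq (ω * z)
          ≤ normSq x + normSq y + normSq z) ↔
      (normSq α ≤ (1 - normSq ω) ^ 2 ∧ normSq β ≤ (1 - normSq ω) ^ 2 ∧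
        normSq α * normSq β * normSq ω ≤
          ((1 - normSq ω) ^ 2 - normSq α) * ((1 - normSq ω) ^ 2 - normSq β)) := by
  set w := normSq ω with hwdef
  set a := normSq α with hadef
  set b := normSq β with hbdef
  have hw : 0 ≤ w := normSq_nonneg ω
  have ha : 0 ≤ a := normSq_nonneg α
  have hb : 0 ≤ b := normSq_nonneg β
  have hd : 0 < 1 - w := by linarith
  set c1 : ℂ := ω * conj α with hc1def
  set c2 : ℂ := ω * conj β with hc2def
  have hc1 : normSq c1 = w * a := by rw [hc1def, normSq_mul, normSq_conj]
  have hc2 : normSq c2 = w * b := by rw [hc2def, normSq_mul, normSq_conj]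
  have expand : ∀ x y z : ℂ,
      normSq (ω * x + α * y) + normSq (ω * y + β * z) + normSq (ω * z)
        = w * normSq x + a * normSq y + b * normSq z + w * normSq y + w * normSq z
          + 2 * (c1 * (x * conj y)).re + 2 * (c2 * (y * conj z)).re := by
    intro x y z
    have e1 : (ω * x) * conj (α * y) = c1 * (x * conj y) := by
      rw [map_mul, hc1def]; ring
    have e2 : (ω * y) * conj (β * z) = c2 * (y * conj z) := by
      rw [map_mul, hc2def]; ring
    rw [Complex.normSq_add, Complex.normSq_add, e1, e2, normSq_mul, normSq_mul, normSq_mul,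
      normSq_mul, normSq_mul]
    ring
  constructor
  · -- contraction ⇒ conditions
    intro H
    have hQ : ∀ x y z : ℂ,
        2 * (c1 * (x * conj y)).re + 2 * (c2 * (y * conj z)).re
          ≤ (1 - w) * normSq x + (1 - w - a) * normSq y + (1 - w - b) * normSq z := by
      intro x y z
      have h := H x y z
      rw [expand x y z] at h
      linarith
    have hbd : b ≤ 1 - w := by
      have h := hQ 0 0 1
      simp at h
      linarith
    have hA : a ≤ (1 - w) ^ 2 := by
      have h := hQ (conj c1 * ((1 : ℝ) : ℂ)) (((1 - w : ℝ)) : ℂ) 0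
      rw [re_aux1 c1 1 (1 - w), normSq_aux1 c1 1, hc1] at h
      simp only [map_zero, mul_zero, normSq_zero, Complex.zero_re, normSq_ofReal] at h
      have hiden : (1 - w) * (w * a * 1 ^ 2) + (1 - w - a) * ((1 - w) * (1 - w))
          - 2 * (w * a * (1 * (1 - w))) = (1 - w) * ((1 - w) ^ 2 - a) := by ring
      have h0 : (1 - w) * 0 ≤ (1 - w) * ((1 - w) ^ 2 - a) := by linarith
      have := le_of_mul_le_mul_left h0 hd
      linarith
    -- main inequality at the optimal point, when a < (1-w)^2
    have main : a < (1 - w) ^ 2 →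
        (1 - w) * (w * b) ≤ ((1 - w) ^ 2 - a) * ((1 - w) - b) := by
      intro hlt
      have hApos : 0 < (1 - w) ^ 2 - a := by linarith
      have h := hQ (conj c1 * conj c2 * ((1 : ℝ) : ℂ)) (conj c2 * (((1 - w : ℝ)) : ℂ))
        ((((1 - w) ^ 2 - a : ℝ)) : ℂ)
      rw [re_aux2 c1 c2 1 (1 - w), re_aux1 c2 (1 - w) ((1 - w) ^ 2 - a),
        normSq_aux2 c1 c2 1, normSq_aux1 c2 (1 - w), hc1, hc2, normSq_ofReal] at h
      have hiden : (1 - w) * (w * a * (w * b) * 1 ^ 2) + (1 - w - a) * (w * b * (1 - w) ^ 2)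
            + (1 - w - b) * (((1 - w) ^ 2 - a) * ((1 - w) ^ 2 - a))
            - (2 * (w * a * (w * b) * (1 * (1 - w)))
              + 2 * (w * b * ((1 - w) * ((1 - w) ^ 2 - a))))
          = ((1 - w) ^ 2 - a) * (((1 - w) ^ 2 - a) * ((1 - w) - b) - (1 - w) * (w * b)) := by
        ring
      have h0 : ((1 - w) ^ 2 - a) * ((1 - w) * (w * b))
          ≤ ((1 - w) ^ 2 - a) * (((1 - w) ^ 2 - a) * ((1 - w) - b)) := by linarith
      exact le_of_mul_le_mul_left h0 hApos
    -- degenerate case a = (1-w)^2 forces w*b = 0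
    have degen : a = (1 - w) ^ 2 → w * b = 0 := by
      intro heq
      by_contra h'
      have hwb' : 0 < w * b := lt_of_le_of_ne (mul_nonneg hw hb) (Ne.symm h')
      have hfam : ∀ t : ℝ, 2 * (w * b * (1 - w)) * t ≤ (1 - w) - b := by
        intro t
        have h := hQ (conj c1 * conj c2 * ((t : ℝ) : ℂ))
          (conj c2 * ((((1 - w) * t : ℝ)) : ℂ)) (((1 : ℝ)) : ℂ)
        rw [re_aux2 c1 c2 t ((1 - w) * t), re_aux1 c2 ((1 - w) * t) 1,
          normSq_aux2 c1 c2 t, normSq_aux1 c2 ((1 - w) * t), hc1, hc2, normSq_ofReal] at h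
        have hcoef : (1 - w) * (w * a * (w * b) * t ^ 2)
            + (1 - w - a) * (w * b * ((1 - w) * t) ^ 2)
            - 2 * (w * a * (w * b) * (t * ((1 - w) * t)))
            = w * b * (1 - w) * ((1 - w) ^ 2 - a) * t ^ 2 := by ring
        have h0 : w * b * (1 - w) * ((1 - w) ^ 2 - a) * t ^ 2 = 0 := by
          rw [heq]; ring
        linarith
      have ht := hfam ((((1 - w) - b) + 1) / (2 * (w * b * (1 - w))))
      have hpos : 0 < 2 * (w * b * (1 - w)) := by positivity
      have he : 2 * (w * b * (1 - w)) * ((((1 - w) - b) + 1) / (2 * (w * b * (1 - w))))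
          = ((1 - w) - b) + 1 := by field_simp; exact mul_div_cancel_left₀ _ h'
      rw [he] at ht
      linarith
    refine ⟨hA, ?_, ?_⟩
    · -- b ≤ (1-w)^2
      rcases lt_or_eq_of_le hA with hlt | heq
      · have hApos : 0 < (1 - w) ^ 2 - a := by linarith
        have key := main hlt
        have hm := mul_le_mul_of_nonneg_left key hd.le
        have cond3 : a * b * w ≤ ((1 - w) ^ 2 - a) * ((1 - w) ^ 2 - b) := by linarith
        have habw : 0 ≤ a * b * w := by positivity
        have h0 : ((1 - w) ^ 2 - a) * 0 ≤ ((1 - w) ^ 2 - a) * ((1 - w) ^ 2 - b) := by linarith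
        have := le_of_mul_le_mul_left h0 hApos
        linarith
      · rcases mul_eq_zero.mp (degen heq) with hw0 | hb0
        · rw [hw0] at hbd ⊢
          nlinarith [hbd]
        · rw [hb0]; positivity
    · -- the product condition
      rcases lt_or_eq_of_le hA with hlt | heq
      · have key := main hlt
        have hm := mul_le_mul_of_nonneg_left key hd.le
        linarith
      · have hwb := degen heq
        have e0 : a * b * w = 0 := by
          have e : a * b * w = a * (w * b) := by ring
          rw [e, hwb, mul_zero]
        rw [e0, ← heq]
        simp
  · -- conditions ⇒ contraction
    rintro ⟨hA, hB, h3⟩ x y z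
    rw [expand x y z]
    have hda : a ≤ 1 - w := by nlinarith [hA, hd]
    have hdb : b ≤ 1 - w := by nlinarith [hB, hd]
    have key2 : (1 - w) * (w * b) ≤ ((1 - w) ^ 2 - a) * ((1 - w) - b) := by
      have hm : (1 - w) * ((1 - w) * (w * b))
          ≤ (1 - w) * (((1 - w) ^ 2 - a) * ((1 - w) - b)) := by linarith
      exact le_of_mul_le_mul_left hm hd
    have hne : (1 - w) ≠ 0 := ne_of_gt hd
    have hcb1 : 2 * (c1 * (x * conj y)).re
        ≤ (1 - w) * normSq x + (w * a / (1 - w)) * normSq y := by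
      apply cross_bound _ _ _ _ _ hd.le (by positivity)
      have he : (1 - w) * (w * a / (1 - w)) = w * a := by field_simp
      rw [hc1, he]
    have hcb2 : 2 * (c2 * (y * conj z)).re
        ≤ (((1 - w) ^ 2 - a) / (1 - w)) * normSq y + ((1 - w) - b) * normSq z := by
      apply cross_bound _ _ _ _ _ (div_nonneg (by linarith [hA]) hd.le) (by linarith [hdb])
      rw [hc2, div_mul_eq_mul_div, le_div_iff₀ hd]
      nlinarith [key2]
    have hcoefY : (w * a / (1 - w)) * normSq y + (((1 - w) ^ 2 - a) / (1 - w)) * normSq y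
        = ((1 - w) - a) * normSq y := by
      field_simp
      ring
    linarith [hcb1, hcb2, hcoefY]

private lemma le_of_sq_le' {A B : ℝ} (hB : 0 ≤ B) (h : A ^ 2 ≤ B ^ 2) : A ≤ B := by
  nlinarith

/-- Contractivity criterion for the 3×3 upper-triangular matrix
`[[ω, α, 0], [0, ω, β], [0, 0, ω]]` with `|ω| < 1`. -/
theorem stmt0 (ω α β : ℂ) (hω : ‖ω‖ < 1)
    (T : Matrix (Fin 3) (Fin 3) ℂ)
    (hT : T = !![ω, α, 0; 0, ω, β; 0, 0, ω]) :
    ‖Matrix.toEuclideanCLM (𝕜 := ℂ) T‖ ≤ 1 ↔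
      ‖α‖ ≤ 1 - ‖ω‖ ^ 2 ∧ ‖β‖ ≤ 1 - ‖ω‖ ^ 2 ∧
        ‖α * β * ω‖ ^ 2 ≤
          ((1 - ‖ω‖ ^ 2) ^ 2 - ‖α‖ ^ 2) * ((1 - ‖ω‖ ^ 2) ^ 2 - ‖β‖ ^ 2) := by
  have hsq : ∀ u : ℂ, ‖u‖ ^ 2 = normSq u := fun u => by
    rw [Complex.sq_norm]
  have hω' : normSq ω < 1 := by
    rw [← hsq ω]; nlinarith [norm_nonneg ω]
  have hd : (0 : ℝ) ≤ 1 - ‖ω‖ ^ 2 := by nlinarith [norm_nonneg ω]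
  -- norm of a Euclidean 3-vector
  have norm3 : ∀ u : Fin 3 → ℂ, ‖(WithLp.equiv 2 (Fin 3 → ℂ)).symm u‖ ^ 2
      = normSq (u 0) + normSq (u 1) + normSq (u 2) := by
    intro u
    rw [EuclideanSpace.norm_eq, Real.sq_sqrt (by positivity), Fin.sum_univ_three]
    simp only [WithLp.equiv_symm_apply, PiLp.toLp_apply, WithLp.ofLp_toLp, hsq]
  have hmv : ∀ x y z : ℂ, Matrix.toLin' T ![x, y, z] = ![ω * x + α * y, ω * y + β * z, ω * z] := by
    intro x y z
    subst hT
    funext i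
    fin_cases i <;>
      simp [Matrix.toLin'_apply, Matrix.mulVec, dotProduct, Fin.sum_univ_three]
  have happ : ∀ x y z : ℂ, Matrix.toEuclideanCLM (𝕜 := ℂ) T
        ((WithLp.equiv 2 (Fin 3 → ℂ)).symm ![x, y, z])
      = (WithLp.equiv 2 (Fin 3 → ℂ)).symm ![ω * x + α * y, ω * y + β * z, ω * z] := by
    intro x y z
    rw [← hmv]; rfl
  have main : ‖Matrix.toEuclideanCLM (𝕜 := ℂ) T‖ ≤ 1 ↔
      (∀ x y z : ℂ,
        normSq (ω * x + α * y) + normSq (ω * y + β * z) + normSq (ω * z)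
          ≤ normSq x + normSq y + normSq z) := by
    constructor
    · intro h x y z
      have h1 := (Matrix.toEuclideanCLM (𝕜 := ℂ) T).le_opNorm
        ((WithLp.equiv 2 (Fin 3 → ℂ)).symm ![x, y, z])
      rw [happ x y z] at h1
      have h2 : ‖(WithLp.equiv 2 (Fin 3 → ℂ)).symm ![ω * x + α * y, ω * y + β * z, ω * z]‖
          ≤ ‖(WithLp.equiv 2 (Fin 3 → ℂ)).symm ![x, y, z]‖ := by
        calc _ ≤ ‖Matrix.toEuclideanCLM (𝕜 := ℂ) T‖
                * ‖(WithLp.equiv 2 (Fin 3 → ℂ)).symm ![x, y, z]‖ := h1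
          _ ≤ 1 * ‖(WithLp.equiv 2 (Fin 3 → ℂ)).symm ![x, y, z]‖ := by
              apply mul_le_mul_of_nonneg_right h (norm_nonneg _)
          _ = _ := one_mul _
      have h3 := pow_le_pow_left₀ (norm_nonneg _) h2 2
      rw [norm3, norm3] at h3
      simpa using h3
    · intro h
      rw [ContinuousLinearMap.opNorm_le_iff zero_le_one]
      intro v
      have hv : v = (WithLp.equiv 2 (Fin 3 → ℂ)).symm ![v 0, v 1, v 2] := by
        apply (WithLp.equiv 2 (Fin 3 → ℂ)).injective
        funext i
        fin_cases i <;> rfl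
      rw [one_mul, hv, happ]
      apply le_of_sq_le' (norm_nonneg _)
      rw [norm3, norm3]
      simpa using h (v 0) (v 1) (v 2)
  rw [main, key_iff ω α β hω']
  have e1 : ‖α‖ ≤ 1 - ‖ω‖ ^ 2 ↔ normSq α ≤ (1 - normSq ω) ^ 2 := by
    rw [← hsq α, ← hsq ω]
    constructor
    · intro h; nlinarith [norm_nonneg α]
    · intro h; nlinarith [norm_nonneg α, hd]
  have e2 : ‖β‖ ≤ 1 - ‖ω‖ ^ 2 ↔ normSq β ≤ (1 - normSq ω) ^ 2 := by
    rw [← hsq β, ← hsq ω]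
    constructor
    · intro h; nlinarith [norm_nonneg β]
    · intro h; nlinarith [norm_nonneg β, hd]
  have e3 : ‖α * β * ω‖ ^ 2 = normSq α * normSq β * normSq ω := by
    rw [norm_mul, norm_mul, mul_pow, mul_pow, hsq, hsq, hsq]
  rw [e1, e2, e3, ← hsq α, ← hsq β, ← hsq ω]
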